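/- If h ∈ ℂℍ \ {0} satisfies N(h) = 0, then the solution set {q ∈ ℂℍ : q·conj(h) = 0} is a 2-dimensional complex subspace of ℂℍ (so L_[h] is a projective line containing [h]); the same holds for {q ∈ ℂℍ : conj(h)·q = 0}. -/

import Mathlib

instance : IsScalarTower ℂ (Quaternion ℂ) (Quaternion ℂ) := IsScalarTower.right (R := ℂ) (A := Quaternion ℂ)

instance : SMulCommClass ℂ (Quaternion ℂ) (Quaternion ℂ) := ⟨fun a x y => by ext <;> simp <;> ring⟩

open Quaternion LinearMap Module Submodule

private def qqi : Quaternion ℂ := ⟨0,1,0,0⟩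
private def qqj : Quaternion ℂ := ⟨0,0,1,0⟩
private def qqk : Quaternion ℂ := ⟨0,0,0,1⟩

private lemma qij : qqi * qqj = qqk := by ext <;> simp only [Quaternion.re_mul, Quaternion.imI_mul, Quaternion.imJ_mul, Quaternion.imK_mul, Quaternion.re_neg, Quaternion.imI_neg, Quaternion.imJ_neg, Quaternion.imK_neg] <;> simp [qqi, qqj, qqk]
private lemma qji : qqj * qqi = -qqk := by ext <;> simp only [Quaternion.re_mul, Quaternion.imI_mul, Quaternion.imJ_mul, Quaternion.imK_mul, Quaternion.re_neg, Quaternion.imI_neg, Quaternion.imJ_neg, Quaternion.imK_neg] <;> simp [qqi, qqj, qqk]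
private lemma qjk : qqj * qqk = qqi := by ext <;> simp only [Quaternion.re_mul, Quaternion.imI_mul, Quaternion.imJ_mul, Quaternion.imK_mul, Quaternion.re_neg, Quaternion.imI_neg, Quaternion.imJ_neg, Quaternion.imK_neg] <;> simp [qqi, qqj, qqk]
private lemma qii : qqi * qqi = -1 := by ext <;> simp only [Quaternion.re_mul, Quaternion.imI_mul, Quaternion.imJ_mul, Quaternion.imK_mul, Quaternion.re_neg, Quaternion.imI_neg, Quaternion.imJ_neg, Quaternion.imK_neg] <;> simp [qqi]

private lemma add_self_qz (x : Quaternion ℂ) (h : x + x = 0) : x = 0 := by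
  rw [Quaternion.ext_iff] at h ⊢
  simp only [Quaternion.re_add, Quaternion.imI_add, Quaternion.imJ_add, Quaternion.imK_add,
    Quaternion.re_zero, Quaternion.imI_zero, Quaternion.imJ_zero, Quaternion.imK_zero,
    add_self_eq_zero] at h
  exact h

private lemma msc (c : ℂ) (a b : Quaternion ℂ) : a * (c • b) = c • (a * b) := by
  ext <;> simp <;> ring

private lemma rank_ge_two (s : Quaternion ℂ) (hs : s ≠ 0) :
    2 ≤ finrank ℂ (LinearMap.range (LinearMap.mulRight ℂ s)) := by
  by_contra hlt
  push_neg at hlt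
  set B := LinearMap.mulRight ℂ s with hB
  have hsmem : s ∈ LinearMap.range B := ⟨1, by simp [hB]⟩
  have hspan : span ℂ {s} ≤ LinearMap.range B := by
    rwa [Submodule.span_singleton_le_iff_mem]
  have h1 : finrank ℂ (span ℂ ({s} : Set (Quaternion ℂ))) = 1 :=
    finrank_span_singleton hs
  have heq : span ℂ ({s} : Set (Quaternion ℂ)) = LinearMap.range B :=
    Submodule.eq_of_le_of_finrank_le hspan (by omega)
  have hmem : ∀ u : Quaternion ℂ, u * s ∈ span ℂ ({s} : Set (Quaternion ℂ)) := by
    intro u; rw [heq]; exact ⟨u, rfl⟩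
  obtain ⟨a, ha⟩ := Submodule.mem_span_singleton.mp (hmem qqi)
  obtain ⟨b, hb⟩ := Submodule.mem_span_singleton.mp (hmem qqj)
  have e1 : qqk * s = (b * a) • s := by
    calc qqk * s = qqi * (qqj * s) := by rw [← mul_assoc, qij]
    _ = qqi * (b • s) := by rw [hb]
    _ = b • (qqi * s) := msc _ _ _
    _ = b • (a • s) := by rw [ha]
    _ = (b * a) • s := smul_smul _ _ _
  have e2 : -(qqk * s) = (a * b) • s := by
    have e2' : qqj * (qqi * s) = -(qqk * s) := by rw [← mul_assoc, qji]; exact neg_mul qqk s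
    calc -(qqk * s) = qqj * (qqi * s) := e2'.symm
    _ = qqj * (a • s) := by rw [ha]
    _ = a • (qqj * s) := msc _ _ _
    _ = a • (b • s) := by rw [hb]
    _ = (a * b) • s := smul_smul _ _ _
  have hneg : qqk * s = -(qqk * s) := by
    have h' := e2
    rw [mul_comm, ← e1] at h'
    exact h'.symm
  have hk0 : qqk * s = 0 := by
    refine add_self_qz _ ?_
    nth_rewrite 1 [hneg]
    exact neg_add_cancel _
  have hi0 : qqi * s = 0 := by
    rw [← qjk, mul_assoc, hk0, mul_zero]
  have : -s = 0 := by
    calc -s = (qqi * qqi) * s := by rw [qii]; exact (neg_one_mul s).symm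
    _ = qqi * (qqi * s) := mul_assoc _ _ _
    _ = 0 := by rw [hi0, mul_zero]
  exact hs (neg_eq_zero.mp this)

private lemma ker_right_dim (h : Quaternion ℂ) (h0 : h ≠ 0)
    (hn : Quaternion.normSq h = 0) :
    finrank ℂ (LinearMap.ker (LinearMap.mulRight ℂ (star h))) = 2 := by
  have hs : star h ≠ 0 := star_ne_zero.mpr h0
  have hrn := LinearMap.finrank_range_add_finrank_ker (LinearMap.mulRight ℂ (star h))
  rw [Quaternion.finrank_eq_four] at hrn
  have hub := rank_ge_two (star h) hs
  have hhs : h * star h = 0 := by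
    rw [Quaternion.self_mul_star, hn]; exact Quaternion.coe_zero
  have hle : LinearMap.range (LinearMap.mulRight ℂ h) ≤
      LinearMap.ker (LinearMap.mulRight ℂ (star h)) := by
    rintro x ⟨y, rfl⟩
    simp only [LinearMap.mem_ker, LinearMap.mulRight_apply]
    rw [mul_assoc, hhs, mul_zero]
  have hlb := le_trans (rank_ge_two h h0) (Submodule.finrank_mono hle)
  omega

/-- The ℂ-linear star equivalence on complex quaternions. -/
private def starLQ : Quaternion ℂ ≃ₗ[ℂ] Quaternion ℂ where
  toFun := star
  invFun := star
  map_add' x y := star_add x y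
  map_smul' c q := by ext <;> simp
  left_inv q := star_star q
  right_inv q := star_star q

theorem ruling_kernels_two_dimensional (h : Quaternion ℂ) (h0 : h ≠ 0)
    (hn : Quaternion.normSq h = 0) :
    Module.finrank ℂ (LinearMap.ker (LinearMap.mulRight ℂ (star h))) = 2 ∧
    Module.finrank ℂ (LinearMap.ker (LinearMap.mulLeft ℂ (star h))) = 2 ∧
    h ∈ LinearMap.ker (LinearMap.mulRight ℂ (star h)) := by
  refine ⟨ker_right_dim h h0 hn, ?_, ?_⟩
  · have hmap : (LinearMap.ker (LinearMap.mulLeft ℂ (star h))).map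
        (starLQ : Quaternion ℂ →ₗ[ℂ] Quaternion ℂ) =
        LinearMap.ker (LinearMap.mulRight ℂ h) := by
      ext q
      simp only [Submodule.mem_map, LinearMap.mem_ker, LinearMap.mulLeft_apply,
        LinearMap.mulRight_apply]
      constructor
      · rintro ⟨p, hp, rfl⟩
        show starLQ p * h = 0
        have : star (star h * p) = 0 := by rw [hp]; exact star_zero (Quaternion ℂ)
        rwa [star_mul, star_star] at this
      · intro hq
        refine ⟨star q, ?_, star_star q⟩
        have : star (q * h) = 0 := by rw [hq]; exact star_zero (Quaternion ℂ)
        rwa [star_mul] at this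
    have := LinearEquiv.finrank_map_eq starLQ (LinearMap.ker (LinearMap.mulLeft ℂ (star h)))
    rw [hmap] at this
    rw [← this]
    have h2 : LinearMap.ker (LinearMap.mulRight ℂ h) =
        LinearMap.ker (LinearMap.mulRight ℂ (star (star h))) := by rw [star_star]
    rw [h2]
    exact ker_right_dim (star h) (star_ne_zero.mpr h0)
      (by rw [Quaternion.normSq_star]; exact hn)
  · simp only [LinearMap.mem_ker, LinearMap.mulRight_apply]
    rw [Quaternion.self_mul_star, hn]; exact Quaternion.coe_zero
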